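/- Under the hypotheses of the weight class: p ≤ N, q ∈ [1, p*), and K measurable with K·ρ^a ∈ L^r(Ω) for some a ∈ [0, q−1], r ∈ (1,∞) satisfying 1/r + a/p + (q−1−a)/p* < p/N, there exists s > N/p and C > 0 such that for every u ∈ W₀^{1,p}(Ω) the function K(x)|u(x)|^{q−1} belongs to L^s(Ω) and ‖K·|u|^{q−1}‖_{L^s} ≤ C‖u‖^{q−1}. -/

import Mathlib

open MeasureTheory Real Filter Topology

/-- The `W^{1,p}_0` norm `‖∇u‖_{L^p(Ω)}`. -/
noncomputable def sobNorm {N : ℕ} (p : ℝ) (Ω : Set (EuclideanSpace ℝ (Fin N)))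
    (u : EuclideanSpace ℝ (Fin N) → ℝ) : ℝ :=
  (eLpNorm (fun x => ‖fderiv ℝ u x‖) (ENNReal.ofReal p) (volume.restrict Ω)).toReal

/-- The `L^b(Ω)` norm. -/
noncomputable def lpNorm {N : ℕ} (b : ℝ) (Ω : Set (EuclideanSpace ℝ (Fin N)))
    (u : EuclideanSpace ℝ (Fin N) → ℝ) : ℝ :=
  (eLpNorm u (ENNReal.ofReal b) (volume.restrict Ω)).toReal

/-- Test functions: smooth functions compactly supported in `Ω`, a dense subspace of
`W^{1,p}_0(Ω)`. -/
def TestFun {N : ℕ} (Ω : Set (EuclideanSpace ℝ (Fin N)))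
    (u : EuclideanSpace ℝ (Fin N) → ℝ) : Prop :=
  ContDiff ℝ 1 u ∧ HasCompactSupport u ∧ tsupport u ⊆ Ω

/-- `ρ(x)`, the distance to the boundary `∂Ω`. -/
noncomputable def bdist {N : ℕ} (Ω : Set (EuclideanSpace ℝ (Fin N)))
    (x : EuclideanSpace ℝ (Fin N)) : ℝ :=
  Metric.infDist x (frontier Ω)

/-- `1/p*` where `p* = Np/(N-p)` if `p < N` and `p* = ∞` if `p ≥ N`. -/
noncomputable def pStarInv (p : ℝ) (N : ℕ) : ℝ :=
  if p < N then (N - p) / (N * p) else 0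

set_option maxHeartbeats 2000000 in
theorem stmt_1 {N : ℕ} (hN : 2 ≤ N) (Ω : Set (EuclideanSpace ℝ (Fin N)))
    (hΩo : IsOpen Ω) (hΩb : Bornology.IsBounded Ω) (hΩne : Ω.Nonempty)
    (p q a r : ℝ) (hp : 1 < p) (hpN : p ≤ N) (hq1 : 1 ≤ q)
    (hq : p < N → q < N * p / (N - p))
    (ha0 : 0 ≤ a) (ha1 : a ≤ q - 1) (hr : 1 < r)
    (K : EuclideanSpace ℝ (Fin N) → ℝ) (hKmeas : Measurable K)
    (hKr : MemLp (fun x => K x * bdist Ω x ^ a) (ENNReal.ofReal r) (volume.restrict Ω))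
    (hsub : 1 / r + a / p + (q - 1 - a) * pStarInv p N < p / N)
    -- the Hardy inequality, valid since `Ω` has Lipschitz boundary
    (hHardy : ∃ CH > 0, ∀ u, TestFun Ω u →
      lpNorm p Ω (fun x => u x / bdist Ω x) ≤ CH * sobNorm p Ω u) :
    ∃ s C : ℝ, N / p < s ∧ 0 < C ∧
      ∀ u, TestFun Ω u →
        MemLp (fun x => K x * |u x| ^ (q - 1)) (ENNReal.ofReal s) (volume.restrict Ω) ∧
        lpNorm s Ω (fun x => K x * |u x| ^ (q - 1)) ≤ C * sobNorm p Ω u ^ (q - 1) := by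
  obtain ⟨CH, hCH0, hHardy⟩ := hHardy
  set μΩ : Measure (EuclideanSpace ℝ (Fin N)) := volume.restrict Ω with hμΩ
  have hp0 : (0:ℝ) < p := lt_trans one_pos hp
  have hN0 : (0:ℝ) < N := by
    have : (0:ℕ) < N := lt_of_lt_of_le (by norm_num) hN
    exact_mod_cast this
  have hr0 : (0:ℝ) < r := lt_trans one_pos hr
  have hq0 : (0:ℝ) < q := lt_of_lt_of_le one_pos hq1
  obtain ⟨σ, hσ⟩ : ∃ x:ℝ, x = pStarInv p N := ⟨_, rfl⟩
  have hσ0 : 0 ≤ σ := by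
    rw [hσ, pStarInv]
    split
    · exact div_nonneg (by linarith) (by positivity)
    · exact le_rfl
  have hσdef : 1/(N:ℝ) + σ = 1/p := by
    rw [hσ, pStarInv]
    split
    · field_simp; ring
    · have hpN' : p = N := le_antisymm hpN (not_lt.1 (by assumption))
      rw [hpN']; ring
  obtain ⟨d, hd⟩ : ∃ x:ℝ, x = q - 1 - a := ⟨_, rfl⟩
  have hd0 : 0 ≤ d := by rw [hd]; linarith
  obtain ⟨T, hT⟩ : ∃ x:ℝ, x = 1/r + a/p + d*σ := ⟨_, rfl⟩
  have hgap : 0 < p/N - T := by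
    rw [hT, hd, hσ]
    linarith [hsub]
  obtain ⟨ε, hε⟩ : ∃ x:ℝ, x = min ((p/N - T)/q) ((1-1/p)/2) := ⟨_, rfl⟩
  have hp1 : 1/p < 1 := by rw [div_lt_one hp0]; exact hp
  have hε0 : 0 < ε := by
    rw [hε]
    apply lt_min (by positivity) (by linarith)
  have hεp : ε < 1 - 1/p := by
    rw [hε]
    calc min ((p/N - T)/q) ((1-1/p)/2) ≤ (1-1/p)/2 := min_le_right _ _
      _ < 1 - 1/p := by linarith
  obtain ⟨β, hβ⟩ : ∃ x:ℝ, x = σ + ε := ⟨_, rfl⟩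
  have hβ0 : 0 < β := by rw [hβ]; linarith
  obtain ⟨b, hb⟩ : ∃ x:ℝ, x = 1/β := ⟨_, rfl⟩
  have hb0 : 0 < b := by rw [hb]; positivity
  have hdβ : d / b = d * β := by rw [hb, div_div_eq_mul_div, div_one]
  obtain ⟨D, hD⟩ : ∃ x:ℝ, x = 1/r + a/p + d*β := ⟨_, rfl⟩
  have hD0 : 0 < D := by rw [hD]; positivity
  have hDlt : D < p/N := by
    have h1 : d*ε < p/N - T := by
      rcases eq_or_lt_of_le hd0 with h|h
      · rw [← h]; simpa using hgap
      · calc d*ε ≤ d*((p/N - T)/q) := by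
              rw [hε]
              exact mul_le_mul_of_nonneg_left (min_le_left _ _) hd0
          _ < p/N - T := by
              rw [mul_div_assoc', div_lt_iff₀ hq0]
              have hdq : d < q := by rw [hd]; linarith
              calc d * (p/↑N - T) < q * (p/↑N - T) := mul_lt_mul_of_pos_right hdq hgap
                _ = (p/↑N - T) * q := mul_comm _ _
    rw [hD, hβ]
    rw [hT] at h1
    have h2 : d*(σ+ε) = d*σ + d*ε := by ring
    linarith
  obtain ⟨s, hs⟩ : ∃ x:ℝ, x = 1/D := ⟨_, rfl⟩
  have hs0 : 0 < s := by rw [hs]; positivity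
  have hsinv : 1/s = D := by rw [hs, one_div_one_div]
  have hsNp : (N:ℝ)/p < s := by
    have h1 : 1/(p/(N:ℝ)) < 1/D := one_div_lt_one_div_of_lt hD0 hDlt
    rw [one_div_div] at h1
    rw [hs]
    exact h1
  obtain ⟨p₀, hp₀⟩ : ∃ x:ℝ, x = 1/(1/p + ε) := ⟨_, rfl⟩
  have hp₀inv : 1/p₀ = 1/p + ε := by rw [hp₀, one_div_one_div]
  have hp₀0 : 0 < p₀ := by rw [hp₀]; positivity
  have hp₀1 : 1 < p₀ := by
    rw [hp₀, lt_one_div one_pos (by positivity), one_div_one]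
    linarith
  have hkey : 1/p + ε = 1/(N:ℝ) + β := by rw [hβ]; linarith [hσdef]
  have hp₀N : p₀ < N := by
    have h2 : 1/(N:ℝ) < 1/p₀ := by rw [hp₀inv]; linarith
    exact lt_of_one_div_lt_one_div hN0 h2
  have hp₀p : p₀ < p := by
    have h2 : 1/p < 1/p₀ := by rw [hp₀inv]; linarith
    exact lt_of_one_div_lt_one_div hp0 h2
  have hβb : 1/p₀ - 1/(N:ℝ) = 1/b := by
    rw [hp₀inv, hkey, hb, one_div_one_div]; ring
  -- geometry and measure facts
  haveI : NeZero N := ⟨by omega⟩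
  have hμuniv : μΩ Set.univ = volume Ω := by rw [hμΩ, Measure.restrict_apply_univ]
  haveI hμΩfin : IsFiniteMeasure μΩ := ⟨by rw [hμuniv]; exact hΩb.measure_lt_top⟩
  have hΩpos : 0 < volume Ω := hΩo.measure_pos volume hΩne
  have hμΩne : μΩ ≠ 0 := by
    intro h
    rw [h] at hμuniv
    simp at hμuniv
    exact absurd hμuniv.symm hΩpos.ne'
  have hfr : (frontier Ω).Nonempty := by
    rw [nonempty_frontier_iff]
    refine ⟨hΩne, fun h => ?_⟩
    obtain ⟨R, hR⟩ := hΩb.subset_closedBall 0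
    have hmem : (EuclideanSpace.single (0:Fin N) (|R|+1) : EuclideanSpace ℝ (Fin N)) ∈ Ω :=
      h ▸ Set.mem_univ _
    have h2 := hR hmem
    rw [Metric.mem_closedBall, dist_zero_right, EuclideanSpace.norm_single] at h2
    have h3 : ‖(|R|+1 : ℝ)‖ = |R|+1 := by
      rw [Real.norm_eq_abs, abs_of_nonneg (by positivity)]
    rw [h3] at h2
    linarith [le_abs_self R]
  have hρcont : Continuous (bdist Ω) := Metric.continuous_infDist_pt _
  have hρpos : ∀ x ∈ Ω, 0 < bdist Ω x := by
    intro x hx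
    refine (IsClosed.notMem_iff_infDist_pos isClosed_frontier hfr).mp ?_
    intro hxf
    rw [hΩo.frontier_eq] at hxf
    exact hxf.2 hx
  have hρ0 : ∀ x, 0 ≤ bdist Ω x := fun x => Metric.infDist_nonneg
  -- constants
  obtain ⟨A, hA⟩ : ∃ x, x = eLpNorm (fun x => K x * bdist Ω x ^ a) (ENNReal.ofReal r) μΩ :=
    ⟨_, rfl⟩
  have hAfin : A < ⊤ := hA ▸ hKr.2
  have hrank : Module.finrank ℝ (EuclideanSpace ℝ (Fin N)) = N := finrank_euclideanSpace_fin
  obtain ⟨C₀, hC₀⟩ : ∃ x : NNReal,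
      x = eLpNormLESNormFDerivOfLeConst (F := ℝ) volume Ω p₀.toNNReal b.toNNReal := ⟨_, rfl⟩
  obtain ⟨V, hV⟩ : ∃ x : ENNReal,
      x = μΩ Set.univ ^ (1/((p₀.toNNReal : ENNReal)).toReal - 1/(ENNReal.ofReal p).toReal) :=
    ⟨_, rfl⟩
  have hVfin : V < ⊤ := by
    rw [hV, hμuniv]
    refine ENNReal.rpow_lt_top_of_nonneg ?_ hΩb.measure_lt_top.ne
    have e1 : ((p₀.toNNReal : ENNReal)).toReal = p₀ := by
      simp [Real.coe_toNNReal _ hp₀0.le]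
    have e2 : (ENNReal.ofReal p).toReal = p := ENNReal.toReal_ofReal hp0.le
    rw [e1, e2]
    have : 1/p < 1/p₀ := by rw [hp₀inv]; linarith
    linarith
  obtain ⟨M, hM⟩ : ∃ x : ℝ, x = ((C₀ : ENNReal) * V).toReal := ⟨_, rfl⟩
  have hM0 : 0 ≤ M := hM ▸ ENNReal.toReal_nonneg
  have hCVfin : (C₀ : ENNReal) * V < ⊤ := ENNReal.mul_lt_top ENNReal.coe_lt_top hVfin
  refine ⟨s, A.toReal * CH ^ a * M ^ d + 1, hsNp, by positivity, ?_⟩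
  intro u hu
  obtain ⟨huC, huS, huΩ⟩ := hu
  have hsupu : Function.support u ⊆ Ω := (subset_tsupport u).trans huΩ
  have hsupf : Function.support (fderiv ℝ u) ⊆ Ω :=
    ((support_fderiv_subset ℝ).trans huΩ)
  obtain ⟨G, hG⟩ : ∃ x, x = eLpNorm (fderiv ℝ u) (ENNReal.ofReal p) μΩ := ⟨_, rfl⟩
  obtain ⟨H, hH⟩ : ∃ x, x = eLpNorm (fun x => u x / bdist Ω x) (ENNReal.ofReal p) μΩ := ⟨_, rfl⟩
  obtain ⟨B, hB⟩ : ∃ x, x = eLpNorm u (ENNReal.ofReal b) μΩ := ⟨_, rfl⟩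
  have hsob : sobNorm p Ω u = G.toReal := by
    rw [sobNorm, hG, eLpNorm_norm]
  have hsob0 : 0 ≤ sobNorm p Ω u := by rw [hsob]; exact ENNReal.toReal_nonneg
  have hGfin : G < ⊤ := by
    rw [hG]
    exact (((huC.continuous_fderiv one_ne_zero).memLp_of_hasCompactSupport
      (μ := volume) (huS.fderiv (𝕜 := ℝ))).restrict Ω).2
  -- Sobolev inequality
  have hofb : ENNReal.ofReal b = ((b.toNNReal : NNReal) : ENNReal) := rfl
  have hofp₀ : ENNReal.ofReal p₀ = ((p₀.toNNReal : NNReal) : ENNReal) := rfl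
  have hcoeb : ((b.toNNReal : NNReal) : ℝ) = b := Real.coe_toNNReal _ hb0.le
  have hcoep₀ : ((p₀.toNNReal : NNReal) : ℝ) = p₀ := Real.coe_toNNReal _ hp₀0.le
  have hSob : eLpNorm u (ENNReal.ofReal b) volume ≤
      (C₀ : ENNReal) * eLpNorm (fderiv ℝ u) ((p₀.toNNReal : NNReal) : ENNReal) volume := by
    rw [hofb, hC₀]
    refine eLpNorm_le_eLpNorm_fderiv_of_le (F := ℝ) volume huC hsupu ?_ ?_ ?_ hΩb
    · rw [← Real.toNNReal_one]
      exact Real.toNNReal_mono hp₀1.le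
    · rw [hrank]
      rw [← NNReal.coe_lt_coe, hcoep₀]
      push_cast
      exact hp₀N
    · rw [hrank]
      push_cast [NNReal.coe_inv, hcoeb, hcoep₀]
      rw [← one_div, ← one_div, ← one_div, hβb]
  have hBle : B ≤ ((C₀ : ENNReal) * V) * G := by
    have h1 : eLpNorm u (ENNReal.ofReal b) μΩ = eLpNorm u (ENNReal.ofReal b) volume := by
      rw [hμΩ]; exact eLpNorm_restrict_eq_of_support_subset hsupu
    have h2 : eLpNorm (fderiv ℝ u) ((p₀.toNNReal : NNReal) : ENNReal) volume
        = eLpNorm (fderiv ℝ u) ((p₀.toNNReal : NNReal) : ENNReal) μΩ := by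
      rw [hμΩ]; exact (eLpNorm_restrict_eq_of_support_subset (ε := EuclideanSpace ℝ (Fin N) →L[ℝ] ℝ) hsupf).symm
    have h3 : eLpNorm (fderiv ℝ u) ((p₀.toNNReal : NNReal) : ENNReal) μΩ ≤ G * V := by
      rw [hG, hV]
      exact eLpNorm_le_eLpNorm_mul_rpow_measure_univ
        (by rw [← hofp₀]; exact ENNReal.ofReal_le_ofReal hp₀p.le)
        (huC.continuous_fderiv one_ne_zero).aestronglyMeasurable
    calc B = eLpNorm u (ENNReal.ofReal b) volume := by rw [hB, h1]
      _ ≤ (C₀ : ENNReal) * eLpNorm (fderiv ℝ u) ((p₀.toNNReal : NNReal) : ENNReal) volume :=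
        hSob
      _ = (C₀ : ENNReal) * eLpNorm (fderiv ℝ u) ((p₀.toNNReal : NNReal) : ENNReal) μΩ := by
        rw [h2]
      _ ≤ (C₀ : ENNReal) * (G * V) := by gcongr
      _ = ((C₀ : ENNReal) * V) * G := by ring
  have hBfin : B < ⊤ := lt_of_le_of_lt hBle
    (ENNReal.mul_lt_top hCVfin hGfin)
  -- Hardy
  have hHle : H.toReal ≤ CH * sobNorm p Ω u := by
    have := hHardy u ⟨huC, huS, huΩ⟩
    rw [_root_.lpNorm] at this
    rw [hH]
    exact this
  have hHfin : H < ⊤ := by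
    obtain ⟨Mu, hMu⟩ := huS.exists_bound_of_continuous huC.continuous
    have hMu0 : 0 ≤ Mu := le_trans (norm_nonneg (u (Classical.arbitrary _))) (hMu _)
    obtain ⟨δ, hδ0, hδ⟩ : ∃ δ, 0 < δ ∧ ∀ x ∈ tsupport u, δ ≤ bdist Ω x := by
      rcases (tsupport u).eq_empty_or_nonempty with h|h
      · exact ⟨1, one_pos, by simp [h]⟩
      · obtain ⟨x0, hx0K, hx0min⟩ := huS.exists_isMinOn h hρcont.continuousOn
        exact ⟨bdist Ω x0, hρpos _ (huΩ hx0K), fun x hx => hx0min hx⟩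
    have hvb : ∀ x, ‖u x / bdist Ω x‖ ≤ Mu / δ := by
      intro x
      by_cases hx : x ∈ tsupport u
      · rw [norm_div]
        have h1 : δ ≤ ‖bdist Ω x‖ := by
          rw [Real.norm_eq_abs, abs_of_nonneg (hρ0 x)]; exact hδ x hx
        exact div_le_div₀ hMu0 (hMu x) hδ0 h1
      · rw [image_eq_zero_of_notMem_tsupport hx, zero_div, norm_zero]
        positivity
    have : MemLp (fun x => u x / bdist Ω x) (ENNReal.ofReal p) μΩ :=
      MemLp.of_bound ((huC.continuous.measurable.div hρcont.measurable).aestronglyMeasurable)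
        (Mu / δ) (Filter.Eventually.of_forall hvb)
    rw [hH]
    exact this.2
  -- measurability
  have mρ : Measurable (bdist Ω) := hρcont.measurable
  have mu : Measurable u := huC.continuous.measurable
  have had : a + d = q - 1 := by rw [hd]; ring
  have mF1 : AEStronglyMeasurable (fun x => K x * bdist Ω x ^ a) μΩ :=
    (hKmeas.mul (mρ.pow_const a)).aestronglyMeasurable
  have mF2 : AEStronglyMeasurable (fun x => ‖u x / bdist Ω x‖ ^ a) μΩ :=
    (((mu.div mρ).norm).pow_const a).aestronglyMeasurable
  have mF3 : AEStronglyMeasurable (fun x => ‖u x‖ ^ d) μΩ :=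
    ((mu.norm).pow_const d).aestronglyMeasurable
  have mF23 : AEStronglyMeasurable (fun x => ‖u x / bdist Ω x‖ ^ a * ‖u x‖ ^ d) μΩ :=
    ((((mu.div mρ).norm).pow_const a).mul ((mu.norm).pow_const d)).aestronglyMeasurable
  -- exponents
  obtain ⟨e2, he2⟩ : ∃ x : ENNReal, x = (ENNReal.ofReal (a/p))⁻¹ := ⟨_, rfl⟩
  obtain ⟨e3, he3⟩ : ∃ x : ENNReal, x = (ENNReal.ofReal (d/b))⁻¹ := ⟨_, rfl⟩
  obtain ⟨e23, he23⟩ : ∃ x : ENNReal, x = (ENNReal.ofReal (a/p + d/b))⁻¹ := ⟨_, rfl⟩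
  have hsplit1 : 1 / ENNReal.ofReal s = 1 / ENNReal.ofReal r + 1 / e23 := by
    rw [he23, one_div, one_div, one_div, inv_inv,
      ← ENNReal.ofReal_inv_of_pos hs0, ← ENNReal.ofReal_inv_of_pos hr0,
      ← ENNReal.ofReal_add (by positivity) (by positivity)]
    congr 1
    rw [← one_div, ← one_div, hsinv, hD, hdβ]
    ring
  have hsplit2 : 1 / e23 = 1 / e2 + 1 / e3 := by
    rw [he2, he3, he23, one_div, one_div, one_div, inv_inv, inv_inv, inv_inv,
      ← ENNReal.ofReal_add (by positivity) (by positivity)]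
  -- Hölder
  have step1 : eLpNorm (fun x => (K x * bdist Ω x ^ a) * (‖u x / bdist Ω x‖ ^ a * ‖u x‖ ^ d))
      (ENNReal.ofReal s) μΩ ≤
      A * eLpNorm (fun x => ‖u x / bdist Ω x‖ ^ a * ‖u x‖ ^ d) e23 μΩ := by
    rw [hA]
    haveI : ENNReal.HolderTriple (ENNReal.ofReal r) e23 (ENNReal.ofReal s) :=
      ⟨by simpa only [one_div] using hsplit1.symm⟩
    have := eLpNorm_le_eLpNorm_mul_eLpNorm'_of_norm (p := ENNReal.ofReal r) (q := e23)
      (r := ENNReal.ofReal s) mF1 mF23 (· * ·) 1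
      (Filter.Eventually.of_forall fun x => by
        rw [NNReal.coe_one, one_mul]; exact le_of_eq (norm_mul _ _))
    rw [ENNReal.coe_one, one_mul] at this
    exact this
  have step2 : eLpNorm (fun x => ‖u x / bdist Ω x‖ ^ a * ‖u x‖ ^ d) e23 μΩ ≤
      eLpNorm (fun x => ‖u x / bdist Ω x‖ ^ a) e2 μΩ * eLpNorm (fun x => ‖u x‖ ^ d) e3 μΩ :=
    by
    haveI : ENNReal.HolderTriple e2 e3 e23 :=
      ⟨by simpa only [one_div] using hsplit2.symm⟩
    have := eLpNorm_le_eLpNorm_mul_eLpNorm'_of_norm (p := e2) (q := e3)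
      (r := e23) mF2 mF3 (· * ·) 1
      (Filter.Eventually.of_forall fun x => by
        rw [NNReal.coe_one, one_mul]; exact le_of_eq (norm_mul _ _))
    rw [ENNReal.coe_one, one_mul] at this
    exact this
  have hF2le : eLpNorm (fun x => ‖u x / bdist Ω x‖ ^ a) e2 μΩ ≤ H ^ a := by
    rcases eq_or_lt_of_le ha0 with h|h
    · rw [← h]
      simp only [Real.rpow_zero, ENNReal.rpow_zero]
      have he2t : e2 = ⊤ := by rw [he2, ← h]; simp
      rw [he2t, eLpNorm_exponent_top, eLpNormEssSup_const _ hμΩne]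
      simp
    · have he2' : e2 * ENNReal.ofReal a = ENNReal.ofReal p := by
        rw [he2, ← ENNReal.ofReal_inv_of_pos (by positivity), inv_div,
          ← ENNReal.ofReal_mul (by positivity), div_mul_cancel₀ _ (ne_of_gt h)]
      rw [eLpNorm_norm_rpow _ h, he2', ← hH]
  have hF3le : eLpNorm (fun x => ‖u x‖ ^ d) e3 μΩ ≤ B ^ d := by
    rcases eq_or_lt_of_le hd0 with h|h
    · rw [← h]
      simp only [Real.rpow_zero, ENNReal.rpow_zero]
      have he3t : e3 = ⊤ := by rw [he3, ← h]; simp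
      rw [he3t, eLpNorm_exponent_top, eLpNormEssSup_const _ hμΩne]
      simp
    · have he3' : e3 * ENNReal.ofReal d = ENNReal.ofReal b := by
        rw [he3, ← ENNReal.ofReal_inv_of_pos (by positivity), inv_div,
          ← ENNReal.ofReal_mul (by positivity), div_mul_cancel₀ _ (ne_of_gt h)]
      rw [eLpNorm_norm_rpow _ h, he3', ← hB]
  have hptw : ∀ x ∈ Ω, K x * |u x| ^ (q-1)
      = (K x * bdist Ω x ^ a) * (‖u x / bdist Ω x‖ ^ a * ‖u x‖ ^ d) := by
    intro x hx
    have hρx := hρpos x hx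
    rw [Real.norm_eq_abs, Real.norm_eq_abs, abs_div, abs_of_pos hρx]
    have h2 : bdist Ω x ^ a * (|u x| / bdist Ω x) ^ a = |u x| ^ a := by
      rw [← Real.mul_rpow hρx.le (by positivity), mul_comm (bdist Ω x),
        div_mul_cancel₀ _ (ne_of_gt hρx)]
    have h3 : |u x| ^ a * |u x| ^ d = |u x| ^ (q-1) := by
      rw [← Real.rpow_add_of_nonneg (abs_nonneg _) ha0 hd0, had]
    calc K x * |u x| ^ (q-1) = K x * (|u x| ^ a * |u x| ^ d) := by rw [h3]
      _ = K x * ((bdist Ω x ^ a * (|u x| / bdist Ω x) ^ a) * |u x| ^ d) := by rw [h2]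
      _ = (K x * bdist Ω x ^ a) * ((|u x| / bdist Ω x) ^ a * |u x| ^ d) := by ring
  have hcongr : eLpNorm (fun x => K x * |u x| ^ (q-1)) (ENNReal.ofReal s) μΩ
      = eLpNorm (fun x => (K x * bdist Ω x ^ a) * (‖u x / bdist Ω x‖ ^ a * ‖u x‖ ^ d))
        (ENNReal.ofReal s) μΩ := by
    apply eLpNorm_congr_ae
    rw [hμΩ]
    exact (ae_restrict_mem hΩo.measurableSet).mono fun x hx => hptw x hx
  have hmain : eLpNorm (fun x => K x * |u x| ^ (q-1)) (ENNReal.ofReal s) μΩ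
      ≤ A * (H ^ a * B ^ d) := by
    rw [hcongr]
    exact le_trans step1 (mul_le_mul' le_rfl
      (le_trans step2 (mul_le_mul' hF2le hF3le)))
  have hfin : A * (H ^ a * B ^ d) < ⊤ :=
    ENNReal.mul_lt_top hAfin (ENNReal.mul_lt_top
      (ENNReal.rpow_lt_top_of_nonneg ha0 hHfin.ne) (ENNReal.rpow_lt_top_of_nonneg hd0 hBfin.ne))
  constructor
  · exact ⟨(hKmeas.mul (mu.abs.pow_const (q-1))).aestronglyMeasurable,
      lt_of_le_of_lt hmain hfin⟩
  · rw [_root_.lpNorm]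
    have t1 := ENNReal.toReal_mono hfin.ne hmain
    rw [ENNReal.toReal_mul, ENNReal.toReal_mul, ← ENNReal.toReal_rpow, ← ENNReal.toReal_rpow]
      at t1
    have hBr : B.toReal ≤ M * sobNorm p Ω u := by
      have h1 := ENNReal.toReal_mono (ENNReal.mul_lt_top hCVfin hGfin).ne hBle
      rw [ENNReal.toReal_mul, ← hM] at h1
      rw [hsob]
      exact h1
    have h2 : H.toReal ^ a ≤ (CH * sobNorm p Ω u) ^ a :=
      Real.rpow_le_rpow ENNReal.toReal_nonneg hHle ha0
    have h3 : B.toReal ^ d ≤ (M * sobNorm p Ω u) ^ d :=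
      Real.rpow_le_rpow ENNReal.toReal_nonneg hBr hd0
    have h4 : A.toReal * (H.toReal ^ a * B.toReal ^ d)
        ≤ A.toReal * ((CH * sobNorm p Ω u) ^ a * (M * sobNorm p Ω u) ^ d) := by
      refine mul_le_mul_of_nonneg_left ?_ ENNReal.toReal_nonneg
      exact mul_le_mul h2 h3 (Real.rpow_nonneg ENNReal.toReal_nonneg _)
        (Real.rpow_nonneg (by positivity) _)
    have h5 : (CH * sobNorm p Ω u) ^ a * (M * sobNorm p Ω u) ^ d
        = CH ^ a * M ^ d * sobNorm p Ω u ^ (q-1) := by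
      rw [Real.mul_rpow hCH0.le hsob0, Real.mul_rpow hM0 hsob0,
        show CH ^ a * sobNorm p Ω u ^ a * (M ^ d * sobNorm p Ω u ^ d)
          = CH ^ a * M ^ d * (sobNorm p Ω u ^ a * sobNorm p Ω u ^ d) from by ring,
        ← Real.rpow_add_of_nonneg hsob0 ha0 hd0, had]
    have hX : 0 ≤ sobNorm p Ω u ^ (q-1) := Real.rpow_nonneg hsob0 _
    calc (eLpNorm (fun x => K x * |u x| ^ (q-1)) (ENNReal.ofReal s) μΩ).toReal
        ≤ A.toReal * (H.toReal ^ a * B.toReal ^ d) := t1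
      _ ≤ A.toReal * ((CH * sobNorm p Ω u) ^ a * (M * sobNorm p Ω u) ^ d) := h4
      _ = A.toReal * (CH ^ a * M ^ d * sobNorm p Ω u ^ (q-1)) := by rw [h5]
      _ = (A.toReal * CH ^ a * M ^ d) * sobNorm p Ω u ^ (q-1) := by ring
      _ ≤ (A.toReal * CH ^ a * M ^ d + 1) * sobNorm p Ω u ^ (q-1) :=
          mul_le_mul_of_nonneg_right (by linarith) hX
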